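/- Let R be an infinite commutative ring with nonzero identity and let n ≥ 2. Then TD(R,n) has an infinite independent set; in particular the independence number of TD(R,n) is infinite. -/

import Mathlib

open SimpleGraph

/-- The total dot product graph `TD(R,n)`: vertices are the nonzero vectors of `R^n`,
and two distinct vertices are adjacent iff their dot product is `0`. -/
def TD (R : Type*) [CommRing R] (n : ℕ) :
    SimpleGraph {x : Fin n → R // x ≠ 0} where
  Adj a b := a ≠ b ∧ ∑ i, a.1 i * b.1 i = 0
  symm := by
    refine ⟨?_⟩
    intro a b ⟨hne, h⟩
    exact ⟨hne.symm, by simpa [mul_comm] using h⟩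
  loopless := by
    refine ⟨?_⟩
    intro a ⟨hne, _⟩
    exact hne rfl

noncomputable def pick (R : Type*) [Infinite R] [DecidableEq R] (s : Finset R) : R :=
  Classical.choose (Infinite.exists_notMem_finset s)

lemma pick_spec (R : Type*) [Infinite R] [DecidableEq R] (s : Finset R) : pick R s ∉ s :=
  Classical.choose_spec (Infinite.exists_notMem_finset s)

noncomputable def aux (R : Type*) [CommRing R] [Infinite R] [DecidableEq R] : ℕ → Finset R
  | 0 => ∅
  | n+1 => aux R n ∪ {pick R (aux R n), -(Ring.inverse (pick R (aux R n)))}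

noncomputable def gg (R : Type*) [CommRing R] [Infinite R] [DecidableEq R] (k : ℕ) : R :=
  pick R (aux R k)

lemma aux_mono (R : Type*) [CommRing R] [Infinite R] [DecidableEq R] :
    Monotone (aux R) := by
  apply monotone_nat_of_le_succ
  intro k
  rw [aux]
  exact Finset.subset_union_left

lemma gg_not_mem (R : Type*) [CommRing R] [Infinite R] [DecidableEq R] (k : ℕ) :
    gg R k ∉ aux R k := pick_spec R _

lemma gg_mem (R : Type*) [CommRing R] [Infinite R] [DecidableEq R] {m k : ℕ} (h : m < k) :
    gg R m ∈ aux R k ∧ -(Ring.inverse (gg R m)) ∈ aux R k := by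
  have h1 : gg R m ∈ aux R (m+1) := by simp [aux, gg]
  have h2 : -(Ring.inverse (gg R m)) ∈ aux R (m+1) := by simp [aux, gg]
  exact ⟨aux_mono R h h1, aux_mono R h h2⟩

lemma gg_inj (R : Type*) [CommRing R] [Infinite R] [DecidableEq R] :
    Function.Injective (gg R) := by
  intro a b hab
  rcases lt_trichotomy a b with h | h | h
  · exact absurd ((gg_mem R h).1) (hab ▸ gg_not_mem R b)
  · exact h
  · exact absurd ((gg_mem R h).1) (hab.symm ▸ gg_not_mem R a)

lemma gg_key (R : Type*) [CommRing R] [Infinite R] [DecidableEq R] {m k : ℕ}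
    (h : m < k) : gg R m * gg R k ≠ -1 := by
  intro hmk
  have hu : gg R m * (-(gg R k)) = 1 := by rw [mul_neg, hmk, neg_neg]
  have hunit : IsUnit (gg R m) := IsUnit.of_mul_eq_one _ hu
  have hinv : Ring.inverse (gg R m) = -(gg R k) := by
    have := Ring.mul_inverse_cancel _ hunit
    have h2 : gg R m * (-(gg R k)) = gg R m * Ring.inverse (gg R m) := by rw [hu, this]
    exact (hunit.mul_left_cancel h2).symm
  have : gg R k = -(Ring.inverse (gg R m)) := by rw [hinv, neg_neg]
  exact (gg_not_mem R k) (this ▸ (gg_mem R h).2)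

/-- the vector (1, r, 0, ..., 0) -/
def vec {R : Type*} [CommRing R] (n : ℕ) (r : R) : Fin n → R :=
  fun i => if (i : ℕ) = 0 then 1 else if (i : ℕ) = 1 then r else 0

lemma vec_dot {R : Type*} [CommRing R] {n : ℕ} (hn : 2 ≤ n) (r s : R) :
    ∑ i, vec n r i * vec n s i = 1 + r * s := by
  set i0 : Fin n := ⟨0, by omega⟩
  set i1 : Fin n := ⟨1, by omega⟩
  have hne : i0 ≠ i1 := by simp [i0, i1, Fin.ext_iff]
  rw [← Finset.sum_subset (Finset.subset_univ {i0, i1})]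
  · rw [Finset.sum_pair hne]
    simp [vec, i0, i1]
  · intro i _ hi
    simp only [Finset.mem_insert, Finset.mem_singleton] at hi
    push_neg at hi
    have h0 : (i : ℕ) ≠ 0 := fun h => hi.1 (by simp [i0, Fin.ext_iff, h])
    have h1 : (i : ℕ) ≠ 1 := fun h => hi.2 (by simp [i1, Fin.ext_iff, h])
    simp [vec, h0, h1]

lemma vec_ne_zero {R : Type*} [CommRing R] [Nontrivial R] {n : ℕ} (hn : 2 ≤ n) (r : R) :
    vec n r ≠ 0 := by
  intro h
  have := congrFun h ⟨0, by omega⟩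
  simp [vec] at this

lemma vec_inj {R : Type*} [CommRing R] {n : ℕ} (hn : 2 ≤ n) {r s : R}
    (h : vec n r = vec n s) : r = s := by
  have := congrFun h ⟨1, by omega⟩
  simpa [vec] using this

/-- if `R` is an infinite commutative ring with nonzero identity and `n ≥ 2`,
then `TD(R,n)` has an infinite independent set. -/
theorem stmt4 (R : Type*) [CommRing R] [Nontrivial R] [Infinite R]
    (n : ℕ) (hn : 2 ≤ n) :
    ∃ S : Set {x : Fin n → R // x ≠ 0}, S.Infinite ∧
      ∀ u ∈ S, ∀ v ∈ S, ¬ (TD R n).Adj u v := by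
  classical
  let F : ℕ → {x : Fin n → R // x ≠ 0} := fun k => ⟨vec n (gg R k), vec_ne_zero hn _⟩
  have hFinj : Function.Injective F := by
    intro a b hab
    exact gg_inj R (vec_inj hn (congrArg Subtype.val hab))
  refine ⟨Set.range F, Set.infinite_range_of_injective hFinj, ?_⟩
  rintro u ⟨k, rfl⟩ v ⟨l, rfl⟩ ⟨hne, hdot⟩
  have hkl : k ≠ l := fun h => hne (by rw [h])
  have hdot' : (1 : R) + gg R k * gg R l = 0 := by
    rw [← vec_dot hn (gg R k) (gg R l)]
    exact hdot
  have hm1 : gg R k * gg R l = -1 := by linear_combination hdot'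
  rcases hkl.lt_or_gt with h | h
  · exact gg_key R h hm1
  · exact gg_key R h (by rw [mul_comm] at hm1; exact hm1)
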